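/- Let Q be a finite connected quandle with its elements {1,2,…,n} naturally ordered and with profile {1, ℓ_1, ℓ_2, …, ℓ_k} where 1 ≤ ℓ_1 ≤ ⋯ ≤ ℓ_{k-1} < ℓ_k. Then for any reordering μ which is natural with respect to r_q for some q ∈ Q, there is a natural reordering ν with respect to r_n such that the quandle matrices after reordering by μ and by ν coincide and ν(i) = i for every integer i with (ℓ_1+⋯+ℓ_{k-1})+1 ≤ i ≤ n. -/

import Mathlib

/-- A quandle structure on a set `Q`: a binary operation `op` that is idempotent,
right-invertible (each right translation `r_b : x ↦ x * b` is a bijection) and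
right-distributive. -/
structure QuandleOp (Q : Type*) where
  op : Q → Q → Q
  op_self : ∀ a, op a a = a
  op_bijective : ∀ b, Function.Bijective fun a => op a b
  op_distrib : ∀ a b c, op (op a b) c = op (op a c) (op b c)

namespace QuandleOp

/-- The right translation `r_b : x ↦ x * b`, as a permutation of `Q`. -/
noncomputable def r {Q : Type*} (S : QuandleOp Q) (b : Q) : Equiv.Perm Q :=
  Equiv.ofBijective _ (S.op_bijective b)

/-- A quandle is connected if every element can be taken to every other element by a
finite composition of the maps `r_b` and their inverses, i.e. by an element of the
subgroup of permutations generated by the `r_b`. -/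
def Connected {Q : Type*} (S : QuandleOp Q) : Prop :=
  ∀ a b : Q, ∃ g ∈ Subgroup.closure (Set.range S.r), g a = b

end QuandleOp

/-- The element `n` of the quandle `{1, …, n}` modelled as `Fin n` (element `m`
corresponds to the index `m - 1`). -/
def theTop (n : ℕ) [NeZero n] : Fin n :=
  ⟨n - 1, Nat.sub_lt (Nat.pos_of_ne_zero (NeZero.ne n)) Nat.one_pos⟩

/-- `ν` is a natural reordering with respect to `r q`, realized by the presentation of
`r q` as the product of the disjoint cycles `(I s 0  I s 1 … I s (ℓ s - 1))` for
`s = 0, …, k-1` together with the fixed point `(q)`, where `1 ≤ ℓ 0 ≤ ⋯ ≤ ℓ (k-1)`: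
it sends `q` to the top element `n` (index `n - 1`) and sends the `t`-th entry of the
`s`-th cycle to the element with index `(ℓ 0 + ⋯ + ℓ (s-1)) + t`. -/
def IsNaturalReorderingWith {n : ℕ} (S : QuandleOp (Fin n)) (q : Fin n)
    (ν : Equiv.Perm (Fin n)) {k : ℕ} (ℓ : Fin k → ℕ)
    (I : (s : Fin k) → Fin (ℓ s) → Fin n) : Prop :=
  (ν q).val = n - 1 ∧
  (∀ s, 1 ≤ ℓ s) ∧
  Monotone ℓ ∧
  (∑ s, ℓ s) = n - 1 ∧
  Function.Injective (fun p : (s : Fin k) × Fin (ℓ s) => I p.1 p.2) ∧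
  (∀ (s : Fin k) (t : Fin (ℓ s)), I s t ≠ q) ∧
  (∀ (s : Fin k) (t : Fin (ℓ s)),
    S.op (I s t) q = I s ⟨(t.val + 1) % ℓ s, Nat.mod_lt _ (Nat.zero_lt_of_lt t.isLt)⟩) ∧
  (∀ (s : Fin k) (t : Fin (ℓ s)),
    (ν (I s t)).val = (∑ j ∈ Finset.Iio s, ℓ j) + t.val)

/-- `ν` is a natural reordering with respect to `r q` (for some presentation of `r q`
as a product of disjoint cycles of weakly increasing lengths, together with `(q)`). -/
def IsNaturalReordering {n : ℕ} (S : QuandleOp (Fin n)) (q : Fin n)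
    (ν : Equiv.Perm (Fin n)) : Prop :=
  ∃ (k : ℕ) (ℓ : Fin k → ℕ) (I : (s : Fin k) → Fin (ℓ s) → Fin n),
    IsNaturalReorderingWith S q ν ℓ I

/-- The elements of the quandle are naturally ordered with cycle lengths `ℓ`:
`r n` is decomposed into disjoint cycles in form (N), i.e. the identity reordering is a
natural reordering with respect to `r n` with cycle lengths `ℓ`.  (This also says that
the profile of the quandle is `{1, ℓ 0, …, ℓ (k-1)}`.) -/
def NaturallyOrderedWith {n : ℕ} [NeZero n] (S : QuandleOp (Fin n)) {k : ℕ}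
    (ℓ : Fin k → ℕ) : Prop :=
  ∃ I, IsNaturalReorderingWith S (theTop n) (Equiv.refl (Fin n)) ℓ I

/-- The elements of the quandle are naturally ordered (the quandle matrix is in
canonical form). -/
def NaturallyOrdered {n : ℕ} [NeZero n] (S : QuandleOp (Fin n)) : Prop :=
  ∃ (k : ℕ) (ℓ : Fin k → ℕ), NaturallyOrderedWith S ℓ

/-- The quandle operation (equivalently, the quandle matrix) obtained after reordering
the elements by the bijection `ν`: the new matrix has entry `ν (i * j)` in row `ν i`
and column `ν j`. -/
def reorderedOp {n : ℕ} (S : QuandleOp (Fin n)) (ν : Equiv.Perm (Fin n)) :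
    Fin n → Fin n → Fin n :=
  fun i j => ν (S.op (ν.symm i) (ν.symm j))

namespace QuandleOp

lemma r_apply {Q : Type*} (S : QuandleOp Q) (b a : Q) : S.r b a = S.op a b := rfl

def autSub {Q : Type*} (S : QuandleOp Q) : Subgroup (Equiv.Perm Q) where
  carrier := {φ | ∀ a b, φ (S.op a b) = S.op (φ a) (φ b)}
  one_mem' := fun _ _ => rfl
  mul_mem' := by
    intro φ ψ hφ hψ a b
    simp only [Equiv.Perm.mul_apply, hψ a b]
    exact hφ _ _
  inv_mem' := by
    intro φ hφ a b
    apply φ.injective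
    rw [hφ]
    simp [Equiv.Perm.coe_inv, Equiv.apply_symm_apply]

lemma r_mem_autSub {Q : Type*} (S : QuandleOp Q) (b : Q) : S.r b ∈ S.autSub := by
  intro a c
  simp only [r_apply]
  exact S.op_distrib a c b

lemma closure_le_autSub {Q : Type*} (S : QuandleOp Q) :
    Subgroup.closure (Set.range S.r) ≤ S.autSub := by
  rw [Subgroup.closure_le]
  rintro _ ⟨b, rfl⟩
  exact S.r_mem_autSub b

section Pres
variable {n : ℕ} (S : QuandleOp (Fin n)) (p : Fin n) {k : ℕ} {ℓ : Fin k → ℕ}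
  {I : (s : Fin k) → Fin (ℓ s) → Fin n}

lemma op_iterate
    (hop : ∀ s t, S.op (I s t) p
      = I s ⟨(t.val + 1) % ℓ s, Nat.mod_lt _ (Nat.zero_lt_of_lt t.isLt)⟩)
    (s : Fin k) (t : Fin (ℓ s)) (m : ℕ) :
    (fun x => S.op x p)^[m] (I s t)
      = I s ⟨(t.val + m) % ℓ s, Nat.mod_lt _ (Nat.zero_lt_of_lt t.isLt)⟩ := by
  induction m with
  | zero => simp [Nat.mod_eq_of_lt t.isLt]
  | succ m ih =>
      rw [Function.iterate_succ_apply', ih, hop]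
      congr 1
      ext
      simp only []
      rw [Nat.mod_add_mod, ← Nat.add_assoc]

lemma iterate_len
    (hop : ∀ s t, S.op (I s t) p
      = I s ⟨(t.val + 1) % ℓ s, Nat.mod_lt _ (Nat.zero_lt_of_lt t.isLt)⟩)
    (s : Fin k) (t : Fin (ℓ s)) :
    (fun x => S.op x p)^[ℓ s] (I s t) = I s t := by
  rw [op_iterate S p hop]
  congr 1
  ext
  simp [Nat.add_mod_right, Nat.mod_eq_of_lt t.isLt]

lemma dvd_of_iterate_eq
    (hinj : Function.Injective fun x : (s : Fin k) × Fin (ℓ s) => I x.1 x.2)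
    (hop : ∀ s t, S.op (I s t) p
      = I s ⟨(t.val + 1) % ℓ s, Nat.mod_lt _ (Nat.zero_lt_of_lt t.isLt)⟩)
    {s : Fin k} {t : Fin (ℓ s)} {m : ℕ}
    (hm : (fun x => S.op x p)^[m] (I s t) = I s t) : ℓ s ∣ m := by
  rw [op_iterate S p hop] at hm
  have hsig : (⟨s, ⟨(t.val + m) % ℓ s, Nat.mod_lt _ (Nat.zero_lt_of_lt t.isLt)⟩⟩ :
      (s : Fin k) × Fin (ℓ s)) = ⟨s, t⟩ := hinj hm
  have h2 : (t.val + m) % ℓ s = t.val := by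
    have := (Sigma.mk.inj_iff.mp hsig).2
    have := eq_of_heq this
    exact congrArg Fin.val this
  have h3 : (t.val + m) % ℓ s = (t.val + 0) % ℓ s := by
    simpa [Nat.mod_eq_of_lt t.isLt] using h2
  have h4 : Nat.ModEq (ℓ s) m 0 := Nat.ModEq.add_left_cancel' t.val h3
  simpa [Nat.modEq_zero_iff_dvd] using h4

lemma exists_preimage
    (hinj : Function.Injective fun x : (s : Fin k) × Fin (ℓ s) => I x.1 x.2)
    (hsum : (∑ s, ℓ s) = n - 1) (hne : ∀ s t, I s t ≠ p)
    {a : Fin n} (ha : a ≠ p) : ∃ s t, I s t = a := by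
  classical
  set F := fun x : (s : Fin k) × Fin (ℓ s) => I x.1 x.2 with hF
  have hcard : (Finset.univ.image F).card = n - 1 := by
    rw [Finset.card_image_of_injective _ hinj, Finset.card_univ]
    simpa [Fintype.card_sigma] using hsum
  have hsub : Finset.univ.image F ⊆ ({p}ᶜ : Finset (Fin n)) := by
    intro a ha'
    simp only [Finset.mem_image, Finset.mem_univ, true_and] at ha'
    obtain ⟨x, rfl⟩ := ha'
    simpa using hne x.1 x.2
  have heq : Finset.univ.image F = ({p}ᶜ : Finset (Fin n)) := by
    apply Finset.eq_of_subset_of_card_le hsub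
    rw [hcard, Finset.card_compl]
    simp
  have : a ∈ Finset.univ.image F := by
    rw [heq]; simpa using ha
  simp only [Finset.mem_image, Finset.mem_univ, true_and] at this
  obtain ⟨x, hx⟩ := this
  exact ⟨x.1, x.2, hx⟩

end Pres
end QuandleOp


set_option maxHeartbeats 1000000 in
/-- last part of Theorem 2 of the paper: let the elements of a finite
connected quandle on `{1,…,n}` be naturally ordered, with profile
`{1, ℓ 0, …, ℓ (k-1)}` where `ℓ (k-2) < ℓ (k-1)` (i.e. `ℓ s < ℓ (k-1)` for all
`s < k - 1`).  For any reordering `μ` natural with respect to some `r q`, there is a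
reordering `ν` natural with respect to `r n` producing the same reordered quandle
matrix as `μ` and fixing every element with index at least `ℓ 0 + ⋯ + ℓ (k-2)`. -/
theorem exists_natural_reordering_same_matrix_fixing_last_cycle
    {n k : ℕ} [NeZero n] (hk : 0 < k) (S : QuandleOp (Fin n)) (hconn : S.Connected)
    (ℓ : Fin k → ℕ) (hord : NaturallyOrderedWith S ℓ)
    (hstrict : ∀ s : Fin k, s.val < k - 1 → ℓ s < ℓ ⟨k - 1, by omega⟩)
    (q : Fin n) (μ : Equiv.Perm (Fin n)) (hμ : IsNaturalReordering S q μ) :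
    ∃ ν : Equiv.Perm (Fin n),
      IsNaturalReordering S (theTop n) ν ∧
      (∀ i j, reorderedOp S μ i j = reorderedOp S ν i j) ∧
      (∀ a : Fin n, (∑ j ∈ Finset.Iio (⟨k - 1, by omega⟩ : Fin k), ℓ j) ≤ a.val →
        ν a = a) := by
  classical
  obtain ⟨I₀, h0⟩ := hord
  obtain ⟨hq0, hℓ1, hmono, hsum, hinj0, hne0, hop0, hidx0⟩ := h0
  obtain ⟨k', ℓ', I', hμ'⟩ := hμ
  obtain ⟨hq', hℓ1', hmono', hsum', hinj', hne', hop', hidx'⟩ := hμ'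
  simp only [Equiv.refl_apply] at hidx0
  set p := theTop n with hp
  set lastk : Fin k := ⟨k - 1, by omega⟩ with hlastk
  set M := ℓ lastk with hMdef
  set L : ℕ := ∑ j ∈ Finset.Iio lastk, ℓ j with hLdef
  have huniv : (Finset.univ : Finset (Fin k)) = insert lastk (Finset.Iio lastk) := by
    ext j
    simp only [Finset.mem_univ, Finset.mem_insert, Finset.mem_Iio, true_iff]
    rcases eq_or_ne j lastk with h | h
    · exact Or.inl h
    · right
      have hv : j.val ≠ k - 1 := fun hv => h (Fin.ext hv)
      have := j.isLt
      rw [Fin.lt_def]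
      simp only [hlastk]
      omega
  have hLM : M + L = n - 1 := by
    rw [hMdef, hLdef, ← hsum, huniv, Finset.sum_insert (by simp)]
  have hM1 : 1 ≤ M := hℓ1 _
  have hn2 : 2 ≤ n := by have := NeZero.ne n; omega
  have hk'pos : 0 < k' := by
    rcases Nat.eq_zero_or_pos k' with h | h
    · exfalso; subst h; simp at hsum'; omega
    · exact h
  set last' : Fin k' := ⟨k' - 1, by omega⟩ with hlast'
  have hmax : ∀ s : Fin k, ℓ s ≤ M := by
    intro s
    exact hmono (by rw [Fin.le_def]; simp only [hlastk]; omega)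
  have hmax' : ∀ s : Fin k', ℓ' s ≤ ℓ' last' := by
    intro s
    exact hmono' (by rw [Fin.le_def]; simp only [hlast']; omega)
  -- the automorphism g sending q to p
  obtain ⟨g, hgmem, hgq⟩ := hconn q p
  have hg : ∀ a b, g (S.op a b) = S.op (g a) (g b) := S.closure_le_autSub hgmem
  -- J := g ∘ I' is a presentation of r_p
  set J : (s : Fin k') → Fin (ℓ' s) → Fin n := fun s t => g (I' s t) with hJ
  have hinjJ : Function.Injective fun x : (s : Fin k') × Fin (ℓ' s) => J x.1 x.2 := by
    intro x y hxy
    exact hinj' (g.injective hxy)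
  have hneJ : ∀ s t, J s t ≠ p := by
    intro s t h
    exact hne' s t (g.injective (h.trans hgq.symm))
  have hopJ : ∀ (s : Fin k') (t : Fin (ℓ' s)), S.op (J s t) p
      = J s ⟨(t.val + 1) % ℓ' s, Nat.mod_lt _ (Nat.zero_lt_of_lt t.isLt)⟩ := by
    intro s t
    rw [hJ]
    simp only
    rw [← hgq, ← hg, hop']
  -- cross lemma: common points have equal cycle lengths
  have hcross : ∀ (s : Fin k) (t : Fin (ℓ s)) (s' : Fin k') (t' : Fin (ℓ' s')),
      I₀ s t = J s' t' → ℓ s = ℓ' s' := by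
    intro s t s' t' h
    apply Nat.dvd_antisymm
    · apply S.dvd_of_iterate_eq p hinj0 hop0 (s := s) (t := t)
      rw [h]
      exact S.iterate_len p hopJ s' t'
    · apply S.dvd_of_iterate_eq p hinjJ hopJ (s := s') (t := t')
      rw [← h]
      exact S.iterate_len p hop0 s t
  -- the longest cycle lengths agree
  have hM' : ℓ' last' = M := by
    apply le_antisymm
    · obtain ⟨s, t, hst⟩ := QuandleOp.exists_preimage p hinj0 hsum hne0
        (hneJ last' ⟨0, hℓ1' last'⟩)
      rw [← hcross s t last' _ hst]
      exact hmax s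
    · obtain ⟨s', t', hst⟩ := QuandleOp.exists_preimage p hinjJ hsum' hneJ
        (hne0 lastk ⟨0, hM1⟩)
      have := hcross lastk ⟨0, hM1⟩ s' t' hst.symm
      rw [hMdef, this]
      exact hmax' s'
  -- base point of the long cycle of J sits on the long cycle of I₀
  obtain ⟨s₀, c, hsc⟩ := QuandleOp.exists_preimage p hinj0 hsum hne0 (hneJ last' ⟨0, hℓ1' last'⟩)
  have hs₀ : s₀ = lastk := by
    by_contra hss
    have hv : s₀.val < k - 1 := by
      have := s₀.isLt
      have : s₀.val ≠ k - 1 := fun hv => hss (by rw [hlastk]; exact Fin.ext hv)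
      omega
    have := hstrict s₀ hv
    have h2 := hcross s₀ c last' _ hsc
    rw [hM'] at h2
    omega
  subst hs₀
  -- g semiconjugates r_q to r_p
  have hsemi : Function.Semiconj g (fun x => S.op x q) (fun x => S.op x p) := by
    intro x
    simp only
    rw [hg x q, hgq]
  have hJu : ∀ u : Fin (ℓ' last'), J last' u
      = I₀ lastk ⟨(c.val + u.val) % M, Nat.mod_lt _ (by omega)⟩ := by
    intro u
    have h1 : I' last' u = (fun x => S.op x q)^[u.val] (I' last' ⟨0, hℓ1' last'⟩) := by
      rw [S.op_iterate q hop']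
      apply congrArg
      ext
      simp [Nat.mod_eq_of_lt u.isLt]
    calc J last' u = g (I' last' u) := rfl
      _ = g ((fun x => S.op x q)^[u.val] (I' last' ⟨0, hℓ1' last'⟩)) := by rw [← h1]
      _ = (fun x => S.op x p)^[u.val] (g (I' last' ⟨0, hℓ1' last'⟩)) :=
          (hsemi.iterate_right u.val) _
      _ = (fun x => S.op x p)^[u.val] (I₀ lastk c) := by rw [hsc]
      _ = I₀ lastk ⟨(c.val + u.val) % M, Nat.mod_lt _ (by omega)⟩ :=
          S.op_iterate p hop0 lastk c u.val
  -- the rotation amount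
  set e : ℕ := (M - c.val) % M with he
  have hkey : ∀ u, u < M → ((c.val + u) % M + e) % M = u := by
    intro u hu
    rcases Nat.eq_zero_or_pos c.val with hc | hc
    · rw [he, hc]
      simp [Nat.mod_self, Nat.mod_eq_of_lt hu]
    · have hcM : c.val < M := c.isLt
      have he2 : e = M - c.val := by
        rw [he]; exact Nat.mod_eq_of_lt (by omega)
      rw [he2, Nat.mod_add_mod]
      have h3 : c.val + u + (M - c.val) = u + M := by omega
      rw [h3, Nat.add_mod_right, Nat.mod_eq_of_lt hu]
  -- the corrected automorphism g'
  obtain ⟨g', hg'def⟩ : ∃ g' : Equiv.Perm (Fin n), g' = (S.r p) ^ e * g := ⟨_, rfl⟩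
  have hg'mem : g' ∈ S.autSub := by
    rw [hg'def]
    exact mul_mem (pow_mem (S.r_mem_autSub p) e) (S.closure_le_autSub hgmem)
  have hg' : ∀ a b, g' (S.op a b) = S.op (g' a) (g' b) := hg'mem
  have hpow : ∀ x, ((S.r p) ^ e) x = (fun y => S.op y p)^[e] x := by
    intro x
    rw [← Equiv.Perm.iterate_eq_pow]
    rfl
  have hfp : (fun y => S.op y p)^[e] p = p := Function.iterate_fixed (f := fun y => S.op y p) (S.op_self p) e
  have hg'q : g' q = p := by
    rw [hg'def]
    simp only [Equiv.Perm.mul_apply]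
    rw [hgq, hpow, hfp]
  have hg'app : ∀ x, g' x = (fun y => S.op y p)^[e] (g x) := by
    intro x
    rw [hg'def]
    simp only [Equiv.Perm.mul_apply]
    rw [hpow]
  -- the long cycle of g' ∘ I' is exactly the last cycle of I₀, aligned
  have hJ'u : ∀ (u : ℕ) (hu : u < M),
      g' (I' last' ⟨u, by rw [hM']; exact hu⟩) = I₀ lastk ⟨u, hu⟩ := by
    intro u hu
    rw [hg'app]
    have := hJu ⟨u, by rw [hM']; exact hu⟩
    rw [hJ] at this
    simp only at this
    rw [this, S.op_iterate p hop0 lastk _ e]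
    exact congrArg (I₀ lastk) (Fin.ext (hkey u hu))
  -- the new reordering
  refine ⟨μ * g'⁻¹, ?_, ?_, ?_⟩
  · refine ⟨k', ℓ', fun s t => g' (I' s t), ?_, hℓ1', hmono', hsum', ?_, ?_, ?_, ?_⟩
    · have : g'⁻¹ p = q := by
        rw [← hg'q]
        exact g'.symm_apply_apply q
      simp only [Equiv.Perm.mul_apply, this]
      exact hq'
    · intro x y hxy
      exact hinj' (g'.injective hxy)
    · intro s t h
      exact hne' s t (g'.injective (h.trans hg'q.symm))
    · intro s t
      rw [← hg'q, ← hg', hop']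
    · intro s t
      simp only [Equiv.Perm.mul_apply, Equiv.Perm.coe_inv, Equiv.symm_apply_apply]
      exact hidx' s t
  · intro i j
    have hsymm : ∀ x, (μ * g'⁻¹ : Equiv.Perm (Fin n)).symm x = g' (μ.symm x) := by
      intro x
      rw [Equiv.symm_apply_eq]
      simp only [Equiv.Perm.mul_apply, Equiv.Perm.coe_inv, Equiv.symm_apply_apply, Equiv.apply_symm_apply]
    simp only [reorderedOp, hsymm]
    rw [← hg' (μ.symm i) (μ.symm j)]
    simp only [Equiv.Perm.mul_apply, Equiv.Perm.coe_inv, Equiv.symm_apply_apply]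
  · intro a ha
    have haL : L ≤ a.val := ha
    have hinvp : g'⁻¹ p = q := by
      rw [← hg'q]; exact g'.symm_apply_apply q
    rcases eq_or_ne a.val (n - 1) with hav | hav
    · have hap : a = p := Fin.ext (by simp [hp, theTop, hav])
      rw [hap]
      apply Fin.ext
      simp only [Equiv.Perm.mul_apply, hinvp]
      rw [hq']
      simp [hp, theTop]
    · have hava : a.val < n - 1 := by have := a.isLt; omega
      obtain ⟨t, htdef⟩ : ∃ t : ℕ, t = a.val - L := ⟨_, rfl⟩
      have htM : t < M := by omega
      have hat : a = I₀ lastk ⟨t, htM⟩ := by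
        apply Fin.ext
        rw [hidx0 lastk ⟨t, htM⟩, ← hLdef]
        show a.val = L + t
        omega
      have hg'a : g' (I' last' ⟨t, by rw [hM']; exact htM⟩) = a := by
        rw [hJ'u t htM, ← hat]
      apply Fin.ext
      conv_lhs => rw [← hg'a]
      simp only [Equiv.Perm.mul_apply, Equiv.Perm.coe_inv, Equiv.symm_apply_apply]
      rw [hidx' last' _]
      have hLL : ℓ' last' + ∑ j ∈ Finset.Iio last', ℓ' j = n - 1 := by
        rw [← hsum']
        have huniv' : (Finset.univ : Finset (Fin k')) = insert last' (Finset.Iio last') := by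
          ext j
          simp only [Finset.mem_univ, Finset.mem_insert, Finset.mem_Iio, true_iff]
          rcases eq_or_ne j last' with h | h
          · exact Or.inl h
          · right
            have hv : j.val ≠ k' - 1 := fun hv => h (Fin.ext hv)
            have := j.isLt
            rw [Fin.lt_def]
            simp only [hlast']
            omega
        rw [huniv', Finset.sum_insert (by simp)]
      rw [hM'] at hLL
      have hL2 : (∑ j ∈ Finset.Iio last', ℓ' j) = L := by omega
      rw [hL2]
      show L + t = a.val
      omega
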